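/- Let X be a topological space such that every point of X has a cozero set neighbourhood with w-compact closure. Then the complete regularisation ρX is locally compact. -/

import Mathlib

open Topology

/-- The inseparability-by-bounded-continuous-functions setoid on a topological space. -/
def crSetoid (X : Type*) [TopologicalSpace X] : Setoid X where
  r x y := ∀ f : BoundedContinuousFunction X ℝ, f x = f y
  iseqv := ⟨fun _ _ => rfl, fun h f => (h f).symm, fun h1 h2 f => (h1 f).trans (h2 f)⟩

/-- The complete regularisation of a topological space, as a set of equivalence classes. -/
def CR (X : Type*) [TopologicalSpace X] : Type _ := Quotient (crSetoid X)

/-- The complete regularisation quotient map. -/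
def crMk (X : Type*) [TopologicalSpace X] (x : X) : CR X := Quotient.mk (crSetoid X) x

/-- The function on `CR X` induced by a bounded continuous function on `X`. -/
def crLift {X : Type*} [TopologicalSpace X] (f : BoundedContinuousFunction X ℝ) : CR X → ℝ :=
  Quotient.lift f fun _ _ h => h f

/-- The topology `τ_cr` on the complete regularisation: the weak topology induced by the
functions coming from bounded continuous functions on `X`. -/
instance CR.instTopologicalSpace (X : Type*) [TopologicalSpace X] : TopologicalSpace (CR X) :=
  ⨅ f : BoundedContinuousFunction X ℝ, TopologicalSpace.induced (crLift f) inferInstance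

/-- The topology generated by cozero sets of continuous real-valued functions. -/
def cozTop (X : Type*) [TopologicalSpace X] : TopologicalSpace X :=
  TopologicalSpace.generateFrom {U | ∃ f : C(X, ℝ), U = {x | f x ≠ 0}}

/-- A space is w-compact if every open cover has a finite subfamily whose union is dense in the
topology generated by cozero sets. -/
def WCompact (X : Type*) [TopologicalSpace X] : Prop :=
  ∀ U : Set (Set X), (∀ u ∈ U, IsOpen u) → ⋃₀ U = Set.univ →
    ∃ F ⊆ U, F.Finite ∧ @closure X (cozTop X) (⋃₀ F) = Set.univ

-- auxiliary lemmas

theorem continuous_crLift {X : Type*} [TopologicalSpace X] (f : BoundedContinuousFunction X ℝ) :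
    Continuous (crLift f) :=
  continuous_iInf_dom (i := f) continuous_induced_dom

theorem continuous_crMk (X : Type*) [TopologicalSpace X] : Continuous (crMk X) :=
  continuous_iInf_rng.mpr fun f => continuous_induced_rng.mpr f.continuous

theorem cozTop_eq (Y : Type*) [ty : TopologicalSpace Y] [CompletelyRegularSpace Y] :
    cozTop Y = ty := by
  have hb : TopologicalSpace.IsTopologicalBasis {U | ∃ f : C(Y, ℝ), U = {x | f x ≠ 0}} := by
    refine TopologicalSpace.isTopologicalBasis_of_isOpen_of_nhds ?_ ?_
    · rintro u ⟨f, rfl⟩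
      exact isOpen_compl_singleton.preimage f.continuous
    · intro a u hau hu
      obtain ⟨f, hf, hf0, hf1⟩ := CompletelyRegularSpace.completely_regular a uᶜ
        hu.isClosed_compl (by simpa using hau)
      refine ⟨{y | (⟨fun y => 1 - (f y : ℝ), by fun_prop⟩ : C(Y, ℝ)) y ≠ 0},
        ⟨_, rfl⟩, ?_, ?_⟩
      · simp [hf0]
      · intro y hy
        by_contra hyu
        apply hy
        have : f y = 1 := hf1 hyu
        simp [this]
  exact hb.eq_generateFrom.symm

theorem WCompact.compactSpace {Y : Type*} [ty : TopologicalSpace Y] [T1Space Y]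
    [CompletelyRegularSpace Y] (hw : WCompact Y) : CompactSpace Y := by
  classical
  refine ⟨isCompact_of_finite_subcover fun {ι} U hU hcov => ?_⟩
  set V : Set (Set Y) := {V | IsOpen V ∧ ∃ i, closure V ⊆ U i} with hV
  have hcov' : ⋃₀ V = Set.univ := by
    rw [Set.eq_univ_iff_forall]
    intro y
    obtain ⟨i, hi⟩ := Set.mem_iUnion.mp (hcov (Set.mem_univ y))
    obtain ⟨t, ht, htc, hts⟩ := exists_mem_nhds_isClosed_subset ((hU i).mem_nhds hi)
    exact ⟨interior t, ⟨isOpen_interior, i, (closure_minimal interior_subset htc).trans hts⟩,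
      mem_interior_iff_mem_nhds.mpr ht⟩
  obtain ⟨F, hFsub, hFfin, hFcl⟩ := hw V (fun u hu => hu.1) hcov'
  rw [cozTop_eq, hFfin.closure_sUnion] at hFcl
  choose i hi using fun v : F => (hFsub v.2).2
  haveI := hFfin.fintype
  refine ⟨Finset.univ.image i, fun y _ => ?_⟩
  have hy : y ∈ ⋃ v ∈ F, closure v := hFcl ▸ Set.mem_univ y
  obtain ⟨v, hvF, hyv⟩ := Set.mem_iUnion₂.mp hy
  exact Set.mem_iUnion₂.mpr ⟨i ⟨v, hvF⟩, Finset.mem_image_of_mem _ (Finset.mem_univ _),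
    hi ⟨v, hvF⟩ hyv⟩

theorem mem_closure_iff' {X : Type*} (t : TopologicalSpace X) {s : Set X} {a : X} :
    a ∈ @closure X t s ↔ ∀ o, IsOpen[t] o → a ∈ o → (o ∩ s).Nonempty := by
  letI := t; exact mem_closure_iff

theorem WCompact.image {A B : Type*} [TopologicalSpace A] [TopologicalSpace B] {φ : A → B}
    (hφ : Continuous φ) (hs : Function.Surjective φ) (hw : WCompact A) : WCompact B := by
  have hcoz : Continuous[cozTop A, cozTop B] φ := by
    rw [cozTop, cozTop, continuous_generateFrom_iff]
    rintro u ⟨g, rfl⟩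
    exact TopologicalSpace.isOpen_generateFrom_of_mem ⟨g.comp ⟨φ, hφ⟩, rfl⟩
  intro U hUopen hUcov
  have h1 : ∀ u ∈ (fun u => φ ⁻¹' u) '' U, IsOpen u := by
    rintro _ ⟨u, hu, rfl⟩; exact (hUopen u hu).preimage hφ
  have h2 : ⋃₀ ((fun u => φ ⁻¹' u) '' U) = Set.univ := by
    rw [Set.sUnion_image, ← Set.preimage_sUnion, hUcov, Set.preimage_univ]
  obtain ⟨F, hFsub, hFfin, hFcl⟩ := hw _ h1 h2
  choose g hgU hgeq using fun v : F => hFsub v.2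
  haveI := hFfin.to_subtype
  refine ⟨Set.range g, Set.range_subset_iff.mpr fun v => hgU v, Set.finite_range g, ?_⟩
  rw [Set.eq_univ_iff_forall]
  intro b
  rw [mem_closure_iff' (cozTop B)]
  intro o ho hbo
  obtain ⟨a, rfl⟩ := hs b
  have ha : a ∈ @closure A (cozTop A) (⋃₀ F) := hFcl ▸ Set.mem_univ a
  have hoa : IsOpen[cozTop A] (φ ⁻¹' o) := by
    letI := cozTop A; letI := cozTop B
    exact ho.preimage hcoz
  obtain ⟨a', ha'o, ha'F⟩ := (mem_closure_iff' (cozTop A)).mp ha (φ ⁻¹' o) hoa hbo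
  obtain ⟨v, hvF, ha'v⟩ := ha'F
  refine ⟨φ a', ha'o, Set.mem_sUnion.mpr ⟨g ⟨v, hvF⟩, Set.mem_range_self _, ?_⟩⟩
  have : a' ∈ φ ⁻¹' (g ⟨v, hvF⟩) := by
    have := hgeq ⟨v, hvF⟩
    simp only at this
    rw [this]
    exact ha'v
  exact this

theorem completelyRegular_of_inducing {Y Z : Type*} [TopologicalSpace Y] [TopologicalSpace Z]
    [CompletelyRegularSpace Z] {e : Y → Z} (he : Topology.IsInducing e) :
    CompletelyRegularSpace Y := by
  constructor
  intro y K hK hy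
  obtain ⟨C, hC, rfl⟩ := he.isClosed_iff.mp hK
  obtain ⟨f, hf, hf0, hf1⟩ := CompletelyRegularSpace.completely_regular (e y) C hC hy
  exact ⟨f ∘ e, hf.comp he.continuous, hf0, fun k hk => hf1 hk⟩

theorem CR.completelyRegularSpace (X : Type*) [TopologicalSpace X] :
    CompletelyRegularSpace (CR X) := by
  constructor
  intro p K hK hp
  have hmem : Kᶜ ∈ 𝓝 p := hK.isOpen_compl.mem_nhds hp
  have hnhds : (𝓝 p) = ⨅ f : BoundedContinuousFunction X ℝ,
      @nhds (CR X) (TopologicalSpace.induced (crLift f) inferInstance) p := nhds_iInf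
  rw [hnhds, Filter.mem_iInf] at hmem
  obtain ⟨I, hIfin, V, hV, hKV⟩ := hmem
  choose t ht htsub using fun i : I => (mem_nhds_induced (crLift i.1) p (V i)).mp (hV i)
  choose ε hε hball using fun i : I => Metric.mem_nhds_iff.mp (ht i)
  haveI := hIfin.fintype
  set g : CR X → ℝ := fun q =>
    min 1 (∑ i : I, min 1 ((ε i)⁻¹ * dist (crLift i.1 q) (crLift i.1 p))) with hg
  have hterm0 : ∀ (q) (i : I), 0 ≤ min 1 ((ε i)⁻¹ * dist (crLift i.1 q) (crLift i.1 p)) :=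
    fun q i => le_min zero_le_one (mul_nonneg (inv_nonneg.mpr (hε i).le) dist_nonneg)
  have hg0 : ∀ q, 0 ≤ g q := fun q =>
    le_min zero_le_one (Finset.sum_nonneg fun i _ => hterm0 q i)
  have hg1 : ∀ q, g q ≤ 1 := fun q => min_le_left _ _
  have hgc : Continuous g := continuous_const.min (continuous_finset_sum _ fun i _ =>
    continuous_const.min (continuous_const.mul ((continuous_crLift i.1).dist continuous_const)))
  refine ⟨fun q => ⟨g q, hg0 q, hg1 q⟩, hgc.subtype_mk _, ?_, ?_⟩
  · apply Subtype.ext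
    show g p = (0 : unitInterval)
    simp [hg, dist_self]
  · intro q hq
    apply Subtype.ext
    show g q = ((1 : unitInterval) : ℝ)
    have hqW : q ∉ ⋂ i : I, (crLift i.1) ⁻¹' Metric.ball (crLift i.1 p) (ε i) := by
      intro hqW
      have hq' : q ∈ Kᶜ := by
        rw [hKV]
        exact Set.mem_iInter.mpr fun i => htsub i (hball i (Set.mem_iInter.mp hqW i))
      exact hq' hq
    obtain ⟨i, hiq⟩ := not_forall.mp (fun hall => hqW (Set.mem_iInter.mpr hall))
    have hdist : ε i ≤ dist (crLift i.1 q) (crLift i.1 p) :=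
      le_of_not_gt fun hlt => hiq (Metric.mem_ball.mpr hlt)
    have h1le : (1 : ℝ) ≤ min 1 ((ε i)⁻¹ * dist (crLift i.1 q) (crLift i.1 p)) := by
      refine le_min le_rfl ?_
      rw [le_inv_mul_iff₀ (hε i), mul_one]
      exact hdist
    have hsum : (1 : ℝ) ≤ ∑ j : I, min 1 ((ε j)⁻¹ * dist (crLift j.1 q) (crLift j.1 p)) :=
      h1le.trans (Finset.single_le_sum (fun j _ => hterm0 q j) (Finset.mem_univ i))
    show min 1 _ = _
    rw [min_eq_left hsum]
    simp

theorem stmt8 {X : Type*} [TopologicalSpace X]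
    (h : ∀ x : X, ∃ f : C(X, ℝ), (∀ y, f y ∈ Set.Icc (0 : ℝ) 1) ∧
      {y | f y ≠ 0} ∈ nhds x ∧ WCompact ↥(closure {y | f y ≠ 0})) :
    LocallyCompactSpace (CR X) := by
  haveI hT2 : T2Space (CR X) := by
    constructor
    intro p q hpq
    obtain ⟨x, rfl⟩ := Quotient.exists_rep p
    obtain ⟨y, rfl⟩ := Quotient.exists_rep q
    have hex : ∃ f : BoundedContinuousFunction X ℝ, f x ≠ f y := by
      by_contra hc
      push_neg at hc
      exact hpq (Quotient.sound hc)
    obtain ⟨f, hf⟩ := hex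
    exact separated_by_continuous (continuous_crLift f) hf
  haveI := CR.completelyRegularSpace X
  haveI : WeaklyLocallyCompactSpace (CR X) := by
    constructor
    intro p
    obtain ⟨x, rfl⟩ := Quotient.exists_rep p
    obtain ⟨f, hrange, hnhds, hw⟩ := h x
    set K := closure {y | f y ≠ 0} with hK
    set S := crMk X '' K with hS
    have hsurj : Function.Surjective
        (fun a : K => (⟨crMk X a, Set.mem_image_of_mem _ a.2⟩ : S)) := by
      rintro ⟨b, a, haK, rfl⟩
      exact ⟨⟨a, haK⟩, rfl⟩
    have hcont : Continuous (fun a : K => (⟨crMk X a, Set.mem_image_of_mem _ a.2⟩ : S)) :=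
      ((continuous_crMk X).comp continuous_subtype_val).subtype_mk _
    have hwS : WCompact S := WCompact.image hcont hsurj hw
    haveI : CompletelyRegularSpace S :=
      completelyRegular_of_inducing (Topology.IsInducing.subtypeVal (t := S))
    haveI : CompactSpace S := hwS.compactSpace
    refine ⟨S, isCompact_iff_compactSpace.mpr ‹_›, ?_⟩
    have hfx : f x ≠ 0 := mem_of_mem_nhds hnhds
    set F : BoundedContinuousFunction X ℝ :=
      ⟨f, 1, fun a b => by simpa using Real.dist_le_of_mem_Icc (hrange a) (hrange b)⟩ with hF
    have hVopen : IsOpen (crLift F ⁻¹' {0}ᶜ) :=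
      isOpen_compl_singleton.preimage (continuous_crLift F)
    have hVsub : crLift F ⁻¹' {0}ᶜ ⊆ S := by
      intro q hq
      obtain ⟨y, rfl⟩ := Quotient.exists_rep q
      exact Set.mem_image_of_mem _ (subset_closure hq)
    exact Filter.mem_of_superset
      (hVopen.mem_nhds (show crLift F (crMk X x) ∈ ({0}ᶜ : Set ℝ) from hfx)) hVsub
  infer_instance
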